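/- Under the hypotheses of the existence theorem for discrete gradient methods (conditions on f̃, ī, ĩ, î, ĭ with constants R, L, H on a bounded set B; R' := max{R, 10L}; H' := min{H, 1/(10L), 1/(6C₂R'), 1/((36C₂+6)L)}), for each x ∈ B with i(x) ≠ 0, each h ∈ [0,H') and each z ∈ B_{R'}(x), the map T(z) := x + h S̃(x,z,h) ī(x,z), with S̃(x,z,h) := (f̃(x,z,h) ĩ(x,z,h)ᵀ − ĩ(x,z,h) f̃(x,z,h)ᵀ)/(î(x,z,h)·ĭ(x,z,h)), satisfies |T(z) − x| ≤ 6 C₂ h |i(x)| ≤ |i(x)|/R'; in particular T maps B_{R'}(x) into itself. -/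

import Mathlib

open scoped RealInnerProductSpace

noncomputable section

/-- Membership in the ball `B_R(x) = {z : ‖z − x‖ ≤ ‖i x‖ / R}`. -/
def InBall {d : ℕ} (i : EuclideanSpace ℝ (Fin d) → EuclideanSpace ℝ (Fin d)) (R : ℝ)
    (x z : EuclideanSpace ℝ (Fin d)) : Prop :=
  ‖z - x‖ ≤ ‖i x‖ / R

/-- The consistency and local Lipschitz conditions at the point `x` for an approximation
`g(·,·,·)` of `target` (conditions (11z)/(12z) of the paper, with balls measured via `i`). -/
def ConsistAt {d : ℕ} (i target : EuclideanSpace ℝ (Fin d) → EuclideanSpace ℝ (Fin d))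
    (x : EuclideanSpace ℝ (Fin d)) (R L H : ℝ)
    (g : EuclideanSpace ℝ (Fin d) → EuclideanSpace ℝ (Fin d) → ℝ → EuclideanSpace ℝ (Fin d)) :
    Prop :=
  g x x 0 = target x ∧
    ∀ h : ℝ, 0 ≤ h → h < H →
      (∀ u v w, InBall i R x u → InBall i R x v → InBall i R x w →
        ‖g u v h - g w v h‖ ≤ L * ‖u - w‖ ∧ ‖g u v h - g u w h‖ ≤ L * ‖v - w‖) ∧
      ‖g x x h - g x x 0‖ ≤ L * h * ‖i x‖

/-- The discrete gradient step equation `x' = x + h S̃(x,x',h) ī(x,x')`, where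
`S̃ = (f̃ ĩᵀ − ĩ f̃ᵀ)/(î·ĭ)`, so that
`S̃ ī = ((ĩ·ī) f̃ − (f̃·ī) ĩ)/(î·ĭ)`. -/
def DGEq {d : ℕ}
    (ftil itil ihat ibrev :
      EuclideanSpace ℝ (Fin d) → EuclideanSpace ℝ (Fin d) → ℝ → EuclideanSpace ℝ (Fin d))
    (ibar : EuclideanSpace ℝ (Fin d) → EuclideanSpace ℝ (Fin d) → EuclideanSpace ℝ (Fin d))
    (x : EuclideanSpace ℝ (Fin d)) (h : ℝ) (x' : EuclideanSpace ℝ (Fin d)) : Prop :=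
  x' = x + (h / ⟪ihat x x' h, ibrev x x' h⟫) •
    (⟪itil x x' h, ibar x x'⟫ • ftil x x' h - ⟪ftil x x' h, ibar x x'⟫ • itil x x' h)

/-- The map `T(z) := x + h S̃(x,z,h) ī(x,z)` of the contraction argument. -/
def Tmap {d : ℕ}
    (ftil itil ihat ibrev :
      EuclideanSpace ℝ (Fin d) → EuclideanSpace ℝ (Fin d) → ℝ → EuclideanSpace ℝ (Fin d))
    (ibar : EuclideanSpace ℝ (Fin d) → EuclideanSpace ℝ (Fin d) → EuclideanSpace ℝ (Fin d))
    (x z : EuclideanSpace ℝ (Fin d)) (h : ℝ) : EuclideanSpace ℝ (Fin d) :=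
  x + (h / ⟪ihat x z h, ibrev x z h⟫) •
    (⟪itil x z h, ibar x z⟫ • ftil x z h - ⟪ftil x z h, ibar x z⟫ • itil x z h)

set_option maxHeartbeats 2000000 in
/-- `T` maps `B_{R′}(x)` into itself: `‖T z − x‖ ≤ 6C₂h‖i x‖ ≤ ‖i x‖/R′`. -/
theorem discrete_gradient_Tmap_maps_ball_into_itself {d : ℕ}
    (f : EuclideanSpace ℝ (Fin d) → EuclideanSpace ℝ (Fin d))
    (I : EuclideanSpace ℝ (Fin d) → ℝ)
    (i : EuclideanSpace ℝ (Fin d) → EuclideanSpace ℝ (Fin d))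
    (hgrad : ∀ x, HasGradientAt I (i x) x)
    (B : Set (EuclideanSpace ℝ (Fin d))) (hB : Bornology.IsBounded B)
    (C₁ : ℝ) (hC₁ : 0 < C₁) (hfC : ∀ x ∈ B, ‖f x‖ ≤ C₁ * ‖i x‖)
    (R L H : ℝ) (hR : 0 < R) (hL : 0 < L) (hH : 0 < H)
    (ftil itil ihat ibrev :
      EuclideanSpace ℝ (Fin d) → EuclideanSpace ℝ (Fin d) → ℝ → EuclideanSpace ℝ (Fin d))
    (ibar : EuclideanSpace ℝ (Fin d) → EuclideanSpace ℝ (Fin d) → EuclideanSpace ℝ (Fin d))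
    (hftil : ∀ x ∈ B, ConsistAt i f x R L H ftil)
    (hitil : ∀ x ∈ B, ConsistAt i i x R L H itil)
    (hihat : ∀ x ∈ B, ConsistAt i i x R L H ihat)
    (hibrev : ∀ x ∈ B, ConsistAt i i x R L H ibrev)
    (hibar_cont : Continuous (fun q : EuclideanSpace ℝ (Fin d) × EuclideanSpace ℝ (Fin d) =>
      ibar q.1 q.2))
    (hibar_dg : ∀ x x' : EuclideanSpace ℝ (Fin d), ⟪ibar x x', x' - x⟫ = I x' - I x)
    (hibar_diag : ∀ x : EuclideanSpace ℝ (Fin d), ibar x x = i x)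
    (hibar_lip : ∀ x ∈ B, ∀ u v w : EuclideanSpace ℝ (Fin d),
      InBall i R x u → InBall i R x v → InBall i R x w →
      ‖ibar u v - ibar w v‖ ≤ L * ‖u - w‖ ∧ ‖ibar u v - ibar u w‖ ≤ L * ‖v - w‖)
    (R' H' : ℝ) (hR' : R' = max R (10 * L))
    (hH' : H' = min H (min (1 / (10 * L))
      (min (1 / (6 * (C₁ + 1/5) * R')) (1 / ((36 * (C₁ + 1/5) + 6) * L)))))
    (x : EuclideanSpace ℝ (Fin d)) (hxB : x ∈ B) (hix : i x ≠ 0)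
    (h : ℝ) (hh0 : 0 ≤ h) (hhH : h < H')
    (z : EuclideanSpace ℝ (Fin d)) (hz : InBall i R' x z) :
    ‖Tmap ftil itil ihat ibrev ibar x z h - x‖ ≤ 6 * (C₁ + 1/5) * h * ‖i x‖ ∧
      6 * (C₁ + 1/5) * h * ‖i x‖ ≤ ‖i x‖ / R' := by
  set C₂ : ℝ := C₁ + 1/5 with hC₂def
  have hC₂ : (0:ℝ) < C₂ := by positivity
  set n : ℝ := ‖i x‖ with hn_def
  have hn : 0 < n := norm_pos_iff.mpr hix
  have hRR' : R ≤ R' := hR' ▸ le_max_left _ _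
  have hLR' : 10 * L ≤ R' := hR' ▸ le_max_right _ _
  have hR'pos : 0 < R' := lt_of_lt_of_le hR hRR'
  -- h bounds
  have hhH1 : h < H := lt_of_lt_of_le hhH (hH' ▸ min_le_left _ _)
  have hh10 : h ≤ 1 / (10 * L) :=
    le_trans hhH.le (hH' ▸ le_trans (min_le_right _ _) (min_le_left _ _))
  have hh6 : h ≤ 1 / (6 * C₂ * R') :=
    le_trans hhH.le (hH' ▸ le_trans (min_le_right _ _)
      (le_trans (min_le_right _ _) (min_le_left _ _)))
  -- ball facts
  have hzx : ‖z - x‖ ≤ n / R' := hz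
  have hzx10 : ‖z - x‖ ≤ n / (10 * L) := by
    refine le_trans hzx ?_
    exact div_le_div_of_nonneg_left hn.le (by positivity) hLR'
  have hzR : InBall i R x z := by
    refine le_trans hzx ?_
    exact div_le_div_of_nonneg_left hn.le hR hRR'
  have hxball : InBall i R x x := by
    simp only [InBall, sub_self, norm_zero]
    positivity
  -- key perturbation estimate
  have key : ∀ target g, ConsistAt i target x R L H g → ‖g x z h - target x‖ ≤ n / 5 := by
    intro target g hg
    obtain ⟨h00, hcond⟩ := hg
    obtain ⟨hlip, hsm⟩ := hcond h hh0 hhH1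
    have h1 : ‖g x z h - g x x h‖ ≤ L * ‖z - x‖ := (hlip x z x hxball hzR hxball).2
    have h2 : L * ‖z - x‖ ≤ n / 10 := by
      calc L * ‖z - x‖ ≤ L * (n / (10 * L)) := by
            exact mul_le_mul_of_nonneg_left hzx10 hL.le
        _ = n / 10 := by field_simp
    have h3 : L * h * n ≤ n / 10 := by
      have : L * h ≤ L * (1 / (10 * L)) := mul_le_mul_of_nonneg_left hh10 hL.le
      have h4 : L * (1 / (10 * L)) = 1 / 10 := by field_simp
      nlinarith
    calc ‖g x z h - target x‖ ≤ ‖g x z h - g x x h‖ + ‖g x x h - target x‖ :=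
          norm_sub_le_norm_sub_add_norm_sub _ _ _
      _ ≤ L * ‖z - x‖ + L * h * n := by
          refine add_le_add h1 ?_
          rw [← h00]; exact hsm
      _ ≤ n / 10 + n / 10 := add_le_add h2 h3
      _ = n / 5 := by ring
  have hf5 : ‖ftil x z h - f x‖ ≤ n / 5 := key f ftil (hftil x hxB)
  have hit5 : ‖itil x z h - i x‖ ≤ n / 5 := key i itil (hitil x hxB)
  have hih5 : ‖ihat x z h - i x‖ ≤ n / 5 := key i ihat (hihat x hxB)
  have hiv5 : ‖ibrev x z h - i x‖ ≤ n / 5 := key i ibrev (hibrev x hxB)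
  have hib5 : ‖ibar x z - i x‖ ≤ n / 5 := by
    have h1 : ‖ibar x z - ibar x x‖ ≤ L * ‖z - x‖ :=
      (hibar_lip x hxB x z x hxball hzR hxball).2
    rw [hibar_diag x] at h1
    have h2 : L * ‖z - x‖ ≤ n / 10 := by
      calc L * ‖z - x‖ ≤ L * (n / (10 * L)) := mul_le_mul_of_nonneg_left hzx10 hL.le
        _ = n / 10 := by field_simp
    linarith
  -- norm bounds
  have hfb : ‖ftil x z h‖ ≤ C₂ * n := by
    have := norm_sub_norm_le (ftil x z h) (f x)
    have hfx : ‖f x‖ ≤ C₁ * n := hfC x hxB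
    have : ‖ftil x z h‖ ≤ ‖f x‖ + n / 5 := by linarith
    rw [hC₂def]; linarith
  have hitb : ‖itil x z h‖ ≤ 6/5 * n := by
    have := norm_sub_norm_le (itil x z h) (i x)
    linarith
  have hibb : ‖ibar x z‖ ≤ 6/5 * n := by
    have := norm_sub_norm_le (ibar x z) (i x)
    linarith
  -- denominator lower bound
  set a := ihat x z h - i x with ha
  set b := ibrev x z h - i x with hb
  have hD : 14/25 * n^2 ≤ ⟪ihat x z h, ibrev x z h⟫ := by
    have e1 : ihat x z h = i x + a := by rw [ha]; abel
    have e2 : ibrev x z h = i x + b := by rw [hb]; abel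
    have expand : ⟪ihat x z h, ibrev x z h⟫ =
        ⟪i x, i x⟫ + ⟪i x, b⟫ + ⟪a, i x⟫ + ⟪a, b⟫ := by
      rw [e1, e2, inner_add_left, inner_add_right, inner_add_right]; ring
    have hself : ⟪i x, i x⟫ = n^2 := by
      rw [real_inner_self_eq_norm_sq]
    have c1 : |⟪i x, b⟫| ≤ n * (n/5) := by
      refine le_trans (abs_real_inner_le_norm _ _) ?_
      exact mul_le_mul_of_nonneg_left hiv5 hn.le
    have c2 : |⟪a, i x⟫| ≤ (n/5) * n := by
      refine le_trans (abs_real_inner_le_norm _ _) ?_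
      exact mul_le_mul_of_nonneg_right hih5 hn.le
    have c3 : |⟪a, b⟫| ≤ (n/5) * (n/5) := by
      refine le_trans (abs_real_inner_le_norm _ _) ?_
      exact mul_le_mul hih5 hiv5 (norm_nonneg _) (by positivity)
    have a1 := abs_le.mp c1
    have a2 := abs_le.mp c2
    have a3 := abs_le.mp c3
    rw [expand, hself]; nlinarith
  have hDpos : 0 < ⟪ihat x z h, ibrev x z h⟫ := lt_of_lt_of_le (by positivity) hD
  -- numerator bound
  set N := ⟪itil x z h, ibar x z⟫ • ftil x z h - ⟪ftil x z h, ibar x z⟫ • itil x z h with hN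
  have hNb : ‖N‖ ≤ 72/25 * C₂ * n^3 := by
    have t1 : ‖⟪itil x z h, ibar x z⟫ • ftil x z h‖ ≤ (6/5 * n) * (6/5 * n) * (C₂ * n) := by
      rw [norm_smul]
      have i1 : |⟪itil x z h, ibar x z⟫| ≤ (6/5 * n) * (6/5 * n) := by
        refine le_trans (abs_real_inner_le_norm _ _) ?_
        exact mul_le_mul hitb hibb (norm_nonneg _) (by positivity)
      calc ‖⟪itil x z h, ibar x z⟫‖ * ‖ftil x z h‖
          ≤ ((6/5 * n) * (6/5 * n)) * (C₂ * n) := by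
            exact mul_le_mul i1 hfb (norm_nonneg _) (by positivity)
        _ = (6/5 * n) * (6/5 * n) * (C₂ * n) := by ring
    have t2 : ‖⟪ftil x z h, ibar x z⟫ • itil x z h‖ ≤ (C₂ * n) * (6/5 * n) * (6/5 * n) := by
      rw [norm_smul]
      have i2 : |⟪ftil x z h, ibar x z⟫| ≤ (C₂ * n) * (6/5 * n) := by
        refine le_trans (abs_real_inner_le_norm _ _) ?_
        exact mul_le_mul hfb hibb (norm_nonneg _) (by positivity)
      calc ‖⟪ftil x z h, ibar x z⟫‖ * ‖itil x z h‖
          ≤ ((C₂ * n) * (6/5 * n)) * (6/5 * n) := by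
            exact mul_le_mul i2 hitb (norm_nonneg _) (by positivity)
        _ = (C₂ * n) * (6/5 * n) * (6/5 * n) := by ring
    calc ‖N‖ ≤ ‖⟪itil x z h, ibar x z⟫ • ftil x z h‖ +
          ‖⟪ftil x z h, ibar x z⟫ • itil x z h‖ := norm_sub_le _ _
      _ ≤ (6/5 * n) * (6/5 * n) * (C₂ * n) + (C₂ * n) * (6/5 * n) * (6/5 * n) :=
          add_le_add t1 t2
      _ = 72/25 * C₂ * n^3 := by ring
  -- first inequality
  have hTx : Tmap ftil itil ihat ibrev ibar x z h - x =
      (h / ⟪ihat x z h, ibrev x z h⟫) • N := by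
    rw [Tmap, hN]; abel
  have main : ‖Tmap ftil itil ihat ibrev ibar x z h - x‖ ≤ 6 * C₂ * h * n := by
    rw [hTx, norm_smul]
    have hq : ‖h / ⟪ihat x z h, ibrev x z h⟫‖ = h / ⟪ihat x z h, ibrev x z h⟫ := by
      rw [Real.norm_eq_abs, abs_of_nonneg (div_nonneg hh0 hDpos.le)]
    rw [hq]
    have hdiv : h / ⟪ihat x z h, ibrev x z h⟫ ≤ h / (14/25 * n^2) := by
      exact div_le_div_of_nonneg_left hh0 (by positivity) hD
    calc h / ⟪ihat x z h, ibrev x z h⟫ * ‖N‖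
        ≤ (h / (14/25 * n^2)) * (72/25 * C₂ * n^3) := by
          exact mul_le_mul hdiv hNb (norm_nonneg _) (by positivity)
      _ = 36/7 * C₂ * h * n := by field_simp; ring
      _ ≤ 6 * C₂ * h * n := by nlinarith [mul_nonneg (mul_nonneg hC₂.le hh0) hn.le]
  refine ⟨main, ?_⟩
  -- second inequality
  calc 6 * C₂ * h * n ≤ 6 * C₂ * (1 / (6 * C₂ * R')) * n := by
        have := mul_le_mul_of_nonneg_left hh6 (by positivity : (0:ℝ) ≤ 6 * C₂)
        exact mul_le_mul_of_nonneg_right this hn.le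
    _ = n / R' := by field_simp
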